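/- Let Ax = b be a full-column-rank least squares problem with solution x₀ = (AᵀA)⁻¹Aᵀb, and let x_λ = (AᵀA + λ²LᵀL)⁻¹Aᵀb be the Tikhonov-regularized solution. Suppose A = U H₀ where U has orthonormal columns, and for each λ ≥ 0 there is an invertible H_λ with H₀ = C_λ H_λ, where [A; λL] = [U C_λ; V S_λ] H_λ is a GSVD in compact format (C_λ, S_λ diagonal n×n, C_λ² + S_λ² = I, UᵀU = I, VᵀV = I). Then x_λ = H₀⁻¹ C_λ² H₀ x₀. -/
import Mathlib

open Matrix

theorem stmt11 (m₁ m₂ n : ℕ)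
    (A : Matrix (Fin m₁) (Fin n) ℝ) (L : Matrix (Fin m₂) (Fin n) ℝ)
    (b : Fin m₁ → ℝ) (lam : ℝ) (hlam : 0 ≤ lam)
    (hArank : A.rank = n)
    (U : Matrix (Fin m₁) (Fin n) ℝ) (V : Matrix (Fin m₂) (Fin n) ℝ)
    (c s : Fin n → ℝ)
    (H₀ Hlam : Matrix (Fin n) (Fin n) ℝ)
    (hU : Uᵀ * U = 1) (hV : Vᵀ * V = 1)
    (hcs : ∀ i, c i ^ 2 + s i ^ 2 = 1)
    (hAU : A = U * H₀)
    (hHlam : IsUnit Hlam)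
    (hH₀ : H₀ = Matrix.diagonal c * Hlam)
    (hgsvd : Matrix.fromRows A (lam • L) =
      Matrix.fromRows (U * Matrix.diagonal c) (V * Matrix.diagonal s) * Hlam)
    (x₀ xlam : Fin n → ℝ)
    (hx₀ : x₀ = ((Aᵀ * A)⁻¹ * Aᵀ).mulVec b)
    (hxlam : xlam = ((Aᵀ * A + lam ^ 2 • (Lᵀ * L))⁻¹ * Aᵀ).mulVec b) :
    xlam = (H₀⁻¹ * (Matrix.diagonal c) ^ 2 * H₀).mulVec x₀ := by
  set d := Matrix.diagonal c with hd
  set e := Matrix.diagonal s with he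
  -- split the GSVD equation
  rw [Matrix.fromRows_mul] at hgsvd
  obtain ⟨hA2, hL2⟩ := Matrix.fromRows_inj hgsvd
  -- A is injective, hence H₀ is a unit
  have hAinj : Function.Injective A.mulVec := by
    have hker : LinearMap.ker A.mulVecLin = ⊥ := by
      have h1 := LinearMap.finrank_range_add_finrank_ker A.mulVecLin
      rw [show Module.finrank ℝ (LinearMap.range A.mulVecLin) = A.rank from rfl, hArank] at h1
      have h2 : Module.finrank ℝ (Fin n → ℝ) = n := by simp
      rw [h2] at h1
      have h3 : Module.finrank ℝ (LinearMap.ker A.mulVecLin) = 0 := by omega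
      exact Submodule.finrank_eq_zero.mp h3
    exact (LinearMap.ker_eq_bot (f := A.mulVecLin)).mp hker
  have hH₀u : IsUnit H₀ := by
    rw [← Matrix.mulVec_injective_iff_isUnit]
    intro v w hvw
    apply hAinj
    rw [hAU, ← Matrix.mulVec_mulVec, ← Matrix.mulVec_mulVec, hvw]
  have hdu : IsUnit d := by
    rw [Matrix.isUnit_iff_isUnit_det] at hH₀u ⊢
    rw [hH₀, Matrix.det_mul] at hH₀u
    · exact isUnit_of_mul_isUnit_left hH₀u
  have hH₀u' : IsUnit H₀ := by
    rw [hH₀]; exact hdu.mul hHlam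
  have hHlamd : IsUnit Hlam.det := (Matrix.isUnit_iff_isUnit_det Hlam).mp hHlam
  have hH₀d : IsUnit H₀.det := (Matrix.isUnit_iff_isUnit_det H₀).mp hH₀u'
  have hdd : IsUnit d.det := (Matrix.isUnit_iff_isUnit_det d).mp hdu
  have hdT : dᵀ = d := Matrix.diagonal_transpose c
  have heT : eᵀ = e := Matrix.diagonal_transpose s
  -- A^T A + lam^2 L^T L = Hlam^T Hlam
  have hsum : Aᵀ * A + lam ^ 2 • (Lᵀ * L) = Hlamᵀ * Hlam := by
    have h1 : Aᵀ * A = Hlamᵀ * (d * d) * Hlam := by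
      rw [hA2]
      simp only [Matrix.transpose_mul, hdT, Matrix.mul_assoc]
      rw [← Matrix.mul_assoc Uᵀ U, hU, Matrix.one_mul]
    have h2 : lam ^ 2 • (Lᵀ * L) = Hlamᵀ * (e * e) * Hlam := by
      have hsm : (lam • L)ᵀ * (lam • L) = lam ^ 2 • (Lᵀ * L) := by
        rw [Matrix.transpose_smul, Matrix.smul_mul, Matrix.mul_smul, smul_smul, sq]
      rw [← hsm, hL2]
      simp only [Matrix.transpose_mul, heT, Matrix.mul_assoc]
      rw [← Matrix.mul_assoc Vᵀ V, hV, Matrix.one_mul]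
    rw [h1, h2, ← Matrix.add_mul, ← Matrix.mul_add]
    have hde : d * d + e * e = 1 := by
      rw [hd, he, Matrix.diagonal_mul_diagonal, Matrix.diagonal_mul_diagonal,
        Matrix.diagonal_add]
      rw [show (fun i => c i * c i + s i * s i) = fun _ => (1:ℝ) from
        funext fun i => by simpa [sq] using hcs i, Matrix.diagonal_one]
    rw [hde, Matrix.mul_one]
  -- A^T A = H₀^T H₀
  have hAtA : Aᵀ * A = H₀ᵀ * H₀ := by
    rw [hAU]
    simp only [Matrix.transpose_mul, Matrix.mul_assoc]
    rw [← Matrix.mul_assoc Uᵀ U, hU, Matrix.one_mul]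
  -- A^T = H₀^T U^T
  have hAT : Aᵀ = H₀ᵀ * Uᵀ := by rw [hAU, Matrix.transpose_mul]
  have hH₀Td : IsUnit H₀ᵀ.det := by rwa [Matrix.det_transpose]
  have hHlamTd : IsUnit Hlamᵀ.det := by rwa [Matrix.det_transpose]
  -- x₀ matrix simplifies
  have hx0m : (Aᵀ * A)⁻¹ * Aᵀ = H₀⁻¹ * Uᵀ := by
    rw [hAtA, hAT, Matrix.mul_inv_rev, Matrix.mul_assoc, ← Matrix.mul_assoc H₀ᵀ⁻¹,
      Matrix.nonsing_inv_mul _ hH₀Td, Matrix.one_mul]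
  have hATl : Aᵀ = Hlamᵀ * (d * Uᵀ) := by
    rw [hA2]
    simp only [Matrix.transpose_mul, hdT, Matrix.mul_assoc]
  have hxlm : (Aᵀ * A + lam ^ 2 • (Lᵀ * L))⁻¹ * Aᵀ = Hlam⁻¹ * d * Uᵀ := by
    rw [hsum, hATl, Matrix.mul_inv_rev, Matrix.mul_assoc, ← Matrix.mul_assoc Hlamᵀ⁻¹,
      Matrix.nonsing_inv_mul _ hHlamTd, Matrix.one_mul, Matrix.mul_assoc]
  -- final computation
  rw [hxlam, hx₀, hx0m, hxlm, Matrix.mulVec_mulVec]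
  congr 1
  have hH₀inv : H₀⁻¹ = Hlam⁻¹ * d⁻¹ := by rw [hH₀, Matrix.mul_inv_rev]
  rw [show H₀⁻¹ * d ^ 2 * H₀ * (H₀⁻¹ * Uᵀ)
      = H₀⁻¹ * d ^ 2 * (H₀ * H₀⁻¹) * Uᵀ by simp only [Matrix.mul_assoc],
    Matrix.mul_nonsing_inv _ hH₀d, Matrix.mul_one, hH₀inv, sq,
    show Hlam⁻¹ * d⁻¹ * (d * d) = Hlam⁻¹ * ((d⁻¹ * d) * d) by simp only [Matrix.mul_assoc],
    Matrix.nonsing_inv_mul _ hdd, Matrix.one_mul]
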